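/- Let Q be a smooth manifold, ϑ a closed one-form on Q, and θ := π_Q*ϑ its pullback to T*Q by the cotangent projection π_Q. Define Ω_θ := −d_θΘ_Q = −dΘ_Q + θ∧Θ_Q, where Θ_Q is the tautological one-form. Then Ω_θ is a nondegenerate two-form and dΩ_θ = θ∧Ω_θ, i.e. (T*Q, Ω_θ, θ) is a locally conformal symplectic manifold with Lee form θ. -/

import Mathlib

noncomputable section

open scoped BigOperators

variable {E F : Type*} [NormedAddCommGroup E] [NormedSpace ℝ E]
  [NormedAddCommGroup F] [NormedSpace ℝ F]

/-- The exterior derivative of a smooth function, as a one-form. -/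
def extDer0 (f : E → ℝ) : E → E → ℝ := fun x v => fderiv ℝ f x v

/-- The exterior derivative of a one-form. -/
def extDer1 (α : E → E → ℝ) : E → E → E → ℝ := fun x u v =>
  fderiv ℝ (fun y => α y v) x u - fderiv ℝ (fun y => α y u) x v

/-- The exterior derivative of a two-form. -/
def extDer2 (ω : E → E → E → ℝ) : E → E → E → E → ℝ := fun x u v w =>
  fderiv ℝ (fun y => ω y v w) x u - fderiv ℝ (fun y => ω y u w) x v +
    fderiv ℝ (fun y => ω y u v) x w

/-- Wedge product of two one-forms. -/
def wedge11 (α β : E → E → ℝ) : E → E → E → ℝ := fun x u v =>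
  α x u * β x v - α x v * β x u

/-- Wedge product of a one-form with a two-form. -/
def wedge12 (θ : E → E → ℝ) (ω : E → E → E → ℝ) : E → E → E → E → ℝ := fun x u v w =>
  θ x u * ω x v w - θ x v * ω x u w + θ x w * ω x u v

/-- Pullback of a one-form along a smooth map. -/
def pb1 (φ : E → F) (α : F → F → ℝ) : E → E → ℝ := fun x v => α (φ x) (fderiv ℝ φ x v)

/-- Pullback of a two-form along a smooth map. -/
def pb2 (φ : E → F) (ω : F → F → F → ℝ) : E → E → E → ℝ := fun x u v =>
  ω (φ x) (fderiv ℝ φ x u) (fderiv ℝ φ x v)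

/-- Model for the cotangent bundle `T*Q` of the manifold `Q = E`. -/
abbrev Cot (E : Type*) [NormedAddCommGroup E] [NormedSpace ℝ E] := E × (E →L[ℝ] ℝ)

/-- The tautological (canonical) one-form `Θ_Q` on `T*Q`. -/
def taut : Cot E → Cot E → ℝ := fun z v => z.2 v.1

/-- The canonical symplectic two-form `Ω_Q = -dΘ_Q` on `T*Q`. -/
def canSymp : Cot E → Cot E → Cot E → ℝ := fun z u v => -(extDer1 taut z u v)
/-- The almost symplectic two-form `Ω_θ = -dΘ_Q + (π_Q*ϑ) ∧ Θ_Q` on `T*Q`,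
for the Lee form `θ = π_Q*ϑ`. -/
def lcsForm (ϑ : E → E →L[ℝ] ℝ) : Cot E → Cot E → Cot E → ℝ := fun z u v =>
  canSymp z u v + (ϑ z.1 u.1 * taut z v - ϑ z.1 v.1 * taut z u)

private lemma hasFDeriv_snd_app (a : E) (z : Cot E) :
    HasFDerivAt (fun y : Cot E => y.2 a)
      ((ContinuousLinearMap.apply ℝ ℝ a).comp (ContinuousLinearMap.snd ℝ E (E →L[ℝ] ℝ))) z :=
  ((ContinuousLinearMap.apply ℝ ℝ a).comp (ContinuousLinearMap.snd ℝ E (E →L[ℝ] ℝ))).hasFDerivAt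

private lemma fderiv_snd_app (a : E) (z u : Cot E) :
    fderiv ℝ (fun y : Cot E => y.2 a) z u = u.2 a := by
  rw [(hasFDeriv_snd_app a z).fderiv]; rfl

private lemma fderiv_theta_app (ϑ : E → E →L[ℝ] ℝ) (hϑs : ContDiff ℝ (⊤ : ℕ∞) ϑ)
    (a x u : E) :
    fderiv ℝ (fun y : E => ϑ y a) x u = fderiv ℝ ϑ x u a := by
  have h : HasFDerivAt (fun y : E => ϑ y a)
      ((ContinuousLinearMap.apply ℝ ℝ a).comp (fderiv ℝ ϑ x)) x :=
    (ContinuousLinearMap.apply ℝ ℝ a).hasFDerivAt.comp x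
      (hϑs.differentiable (by simp) x).hasFDerivAt
  rw [h.fderiv]; rfl

private lemma symmA (ϑ : E → E →L[ℝ] ℝ) (hϑs : ContDiff ℝ (⊤ : ℕ∞) ϑ)
    (hϑc : ∀ x u v, extDer1 (fun y w => ϑ y w) x u v = 0) (x a b : E) :
    fderiv ℝ ϑ x a b = fderiv ℝ ϑ x b a := by
  have h := hϑc x a b
  simp only [extDer1, fderiv_theta_app ϑ hϑs, sub_eq_zero] at h
  exact h

private lemma lcs_eval (ϑ : E → E →L[ℝ] ℝ) (z u v : Cot E) :
    lcsForm ϑ z u v = v.2 u.1 - u.2 v.1 + (ϑ z.1 u.1 * z.2 v.1 - ϑ z.1 v.1 * z.2 u.1) := by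
  simp only [lcsForm, canSymp, extDer1, taut, fderiv_snd_app]
  ring

private lemma hasFDeriv_pbtheta (ϑ : E → E →L[ℝ] ℝ) (hϑs : ContDiff ℝ (⊤ : ℕ∞) ϑ)
    (a : E) (z : Cot E) :
    HasFDerivAt (fun y : Cot E => ϑ y.1 a)
      (((ContinuousLinearMap.apply ℝ ℝ a).comp (fderiv ℝ ϑ z.1)).comp
        (ContinuousLinearMap.fst ℝ E (E →L[ℝ] ℝ))) z :=
  ((ContinuousLinearMap.apply ℝ ℝ a).hasFDerivAt.comp z.1
    (hϑs.differentiable (by simp) z.1).hasFDerivAt).comp z (hasFDerivAt_fst)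

private lemma fderiv_lcs (ϑ : E → E →L[ℝ] ℝ) (hϑs : ContDiff ℝ (⊤ : ℕ∞) ϑ)
    (z u v w : Cot E) :
    fderiv ℝ (fun y : Cot E => lcsForm ϑ y v w) z u =
      (fderiv ℝ ϑ z.1 u.1 v.1 * z.2 w.1 + ϑ z.1 v.1 * u.2 w.1)
        - (fderiv ℝ ϑ z.1 u.1 w.1 * z.2 v.1 + ϑ z.1 w.1 * u.2 v.1) := by
  have hfun : (fun y : Cot E => lcsForm ϑ y v w) =
      fun y : Cot E => (w.2 v.1 - v.2 w.1) +
        (ϑ y.1 v.1 * y.2 w.1 - ϑ y.1 w.1 * y.2 v.1) := by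
    funext y; rw [lcs_eval]
  have h := (hasFDerivAt_const (w.2 v.1 - v.2 w.1) z).add
    ((((hasFDeriv_pbtheta ϑ hϑs v.1 z).mul (hasFDeriv_snd_app w.1 z))).sub
      (((hasFDeriv_pbtheta ϑ hϑs w.1 z).mul (hasFDeriv_snd_app v.1 z))))
  rw [hfun, (show HasFDerivAt (fun y : Cot E => (w.2 v.1 - v.2 w.1) +
        (ϑ y.1 v.1 * y.2 w.1 - ϑ y.1 w.1 * y.2 v.1)) _ z from h).fderiv]
  simp [ContinuousLinearMap.comp_apply, ContinuousLinearMap.smul_apply]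
  ring

/-- For a closed one-form `ϑ` on `Q = E` with pullback
`θ = π_Q*ϑ` to `T*Q`, the two-form `Ω_θ = -d_θΘ_Q = -dΘ_Q + θ∧Θ_Q` is
nondegenerate and satisfies `dΩ_θ = θ ∧ Ω_θ`, and `θ` is closed;
i.e. `(T*Q, Ω_θ, θ)` is a locally conformal symplectic manifold with
Lee form `θ`. -/
theorem cotangent_lcs_structure
    [FiniteDimensional ℝ E]
    (ϑ : E → E →L[ℝ] ℝ) (hϑs : ContDiff ℝ (⊤ : ℕ∞) ϑ)
    (hϑc : ∀ x u v, extDer1 (fun y w => ϑ y w) x u v = 0)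
    (θ : Cot E → Cot E → ℝ) (hθ : ∀ z v, θ z v = ϑ z.1 v.1) :
    (∀ z u, (∀ v, lcsForm ϑ z u v = 0) → u = 0) ∧
    (∀ z u v w, extDer2 (lcsForm ϑ) z u v w = wedge12 θ (lcsForm ϑ) z u v w) ∧
    (∀ z u v, extDer1 θ z u v = 0) := by
  have symm := symmA ϑ hϑs hϑc
  refine ⟨?_, ?_, ?_⟩
  · intro z u h
    have h1 : u.1 = 0 := by
      by_contra h1
      obtain ⟨p, -, hp⟩ := exists_dual_vector ℝ u.1 (norm_ne_zero_iff.mpr h1)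
      have hv := h (0, p)
      rw [lcs_eval] at hv
      simp only [map_zero, mul_zero, zero_mul, sub_zero, zero_sub, add_zero] at hv
      simp only [RCLike.ofReal_real_eq_id, id] at hp
      rw [hp] at hv
      exact h1 (norm_eq_zero.mp (by linarith [norm_nonneg u.1]))
    have h2 : u.2 = 0 := by
      ext w
      have hv := h (w, (0 : E →L[ℝ] ℝ))
      rw [lcs_eval] at hv
      simp [h1] at hv
      simpa using hv
    exact Prod.ext h1 h2
  · intro z u v w
    simp only [extDer2, fderiv_lcs ϑ hϑs]
    simp only [wedge12, hθ, lcs_eval]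
    linear_combination (symm z.1 u.1 v.1) * z.2 w.1 - (symm z.1 u.1 w.1) * z.2 v.1 +
      (symm z.1 v.1 w.1) * z.2 u.1
  · intro z u v
    have hf : ∀ p : Cot E, (fun y : Cot E => θ y p) = fun y : Cot E => ϑ y.1 p.1 :=
      fun p => funext fun y => hθ y p
    have hd : ∀ p q : Cot E, fderiv ℝ (fun y : Cot E => θ y p) z q = fderiv ℝ ϑ z.1 q.1 p.1 := by
      intro p q
      rw [hf p, (hasFDeriv_pbtheta ϑ hϑs p.1 z).fderiv]; rfl
    simp only [extDer1, hd]
    rw [symm z.1 u.1 v.1]; ring
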